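/- Regard V as a vector space over the field Z(T) via the restriction of the T-action. Then A and A* are Z(T)-linear, each is diagonalizable as a Z(T)-linear endomorphism of V with the same eigenvalues θ_0,…,θ_d (resp. θ*_0,…,θ*_d) and the same eigenspaces E_0V,…,E_dV (resp. E*_0V,…,E*_dV) as over F, the conditions E_i A* E_j = 0 and E*_i A E*_j = 0 for |i − j| > 1 continue to hold, the only Z(T)-subspaces invariant under both A and A* are 0 and V, and dim_{Z(T)}(E_iV) = ρ_i/ρ for 0 ≤ i ≤ d, where ρ_i = dim_F(E_iV) and ρ = dim_F Z(T). In other words, (A; E_0,…,E_d; A*; E*_0,…,E*_d) acts on the Z(T)-vector space V as a TD system with eigenvalue sequence {θ_i}, dual eigenvalue sequence {θ*_i}, and shape {ρ_i/ρ}. -/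

import Mathlib

/-- A tridiagonal system on `V`: `A, B` (with `B` playing the role of `A*`) are
diagonalizable, `E i` (resp. `E' i`) is the ordering of the primitive idempotents of `A`
(resp. `A*`) -- pairwise orthogonal nonzero idempotents summing to `1`, with
`A = ∑ θ i • E i` for the distinct eigenvalues `θ i` -- satisfying the tridiagonal
conditions `E i * A* * E j = 0` and `E' i * A * E' j = 0` for `|i - j| > 1`, and such that
the only subspaces invariant under both `A` and `A*` are `0` and `V`. -/
structure TDSystem (F : Type*) [Field F] (V : Type*) [AddCommGroup V] [Module F V]
    (d : ℕ) where
  A : Module.End F V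
  B : Module.End F V
  E : Fin (d + 1) → Module.End F V
  E' : Fin (d + 1) → Module.End F V
  θ : Fin (d + 1) → F
  θ' : Fin (d + 1) → F
  θ_inj : Function.Injective θ
  θ'_inj : Function.Injective θ'
  E_idem : ∀ i, E i * E i = E i
  E'_idem : ∀ i, E' i * E' i = E' i
  E_orth : ∀ i j, i ≠ j → E i * E j = 0
  E'_orth : ∀ i j, i ≠ j → E' i * E' j = 0
  E_sum : ∑ i, E i = 1
  E'_sum : ∑ i, E' i = 1
  E_ne : ∀ i, E i ≠ 0
  E'_ne : ∀ i, E' i ≠ 0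
  A_eq : A = ∑ i, θ i • E i
  B_eq : B = ∑ i, θ' i • E' i
  tri : ∀ i j : Fin (d + 1), 1 < |((i : ℕ) : ℤ) - ((j : ℕ) : ℤ)| → E i * B * E j = 0
  tri' : ∀ i j : Fin (d + 1), 1 < |((i : ℕ) : ℤ) - ((j : ℕ) : ℤ)| → E' i * A * E' j = 0
  irred : ∀ W : Submodule F V, (∀ v ∈ W, A v ∈ W) → (∀ v ∈ W, B v ∈ W) → W = ⊥ ∨ W = ⊤

variable {F : Type*} [Field F] {V : Type*} [AddCommGroup V] [Module F V] {d : ℕ}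

/-- The `F`-subalgebra `T` of `End F V` generated by `A` and `A*`. -/
def TDSystem.T (S : TDSystem F V d) : Subalgebra F (Module.End F V) :=
  Algebra.adjoin F {S.A, S.B}

/-- The center `Z(T)` of `T`: the elements of `T` commuting with everything in `T`. -/
def TDSystem.Z (S : TDSystem F V d) : Subalgebra F (Module.End F V) :=
  S.T ⊓ Subalgebra.centralizer F (S.T : Set (Module.End F V))

set_option synthInstance.maxHeartbeats 1000000
set_option maxHeartbeats 1000000

/-- `Z(T)` is commutative (its elements lie in `T` and centralize `T`). -/
instance (S : TDSystem F V d) : CommRing S.Z :=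
  { (inferInstance : Ring S.Z) with
    mul_comm := fun a b => Subtype.ext <| by
      have hb : (b : Module.End F V) ∈ Subalgebra.centralizer F (S.T : Set (Module.End F V)) :=
        b.2.2
      exact (Subalgebra.mem_centralizer_iff F).mp hb _ a.2.1 }

private lemma halg_aux {F : Type*} [Field F] {V : Type*} [AddCommGroup V] [Module F V]
    (Z : Subalgebra F (Module.End F V)) (c : F) (w : V) :
    (algebraMap F Z c) • w = c • w := by
  show ((algebraMap F Z c : Z) : Module.End F V) w = c • w
  rw [Subalgebra.coe_algebraMap, Module.algebraMap_end_apply]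

private lemma eigen_aux {F : Type*} [Field F] {V : Type*} [AddCommGroup V] [Module F V]
    {d : ℕ} (S : TDSystem F V d)
    (A : Module.End F V) (E : Fin (d + 1) → Module.End F V) (θ : Fin (d + 1) → F)
    (hθ : Function.Injective θ)
    (hidem : ∀ i, E i * E i = E i)
    (horth : ∀ i j, i ≠ j → E i * E j = 0)
    (hsum : ∑ i, E i = 1)
    (hA : A = ∑ i, θ i • E i)
    (hcomm : ∀ z : S.Z, A * (z : Module.End F V) = (z : Module.End F V) * A) :
    ∃ A' : Module.End S.Z V,
      (∀ v : V, A' v = A v) ∧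
      (⨆ μ : S.Z, Module.End.eigenspace A' μ) = ⊤ ∧
      (∀ i, (Module.End.eigenspace A' (algebraMap F S.Z (θ i)) : Set V) = Set.range (E i)) := by
  have hAE : ∀ i, A * E i = θ i • E i := by
    intro i
    rw [hA, Finset.sum_mul]
    rw [Finset.sum_eq_single i (fun j _ hj => by rw [smul_mul_assoc, horth j i hj, smul_zero])
      (fun h => absurd (Finset.mem_univ i) h)]
    rw [smul_mul_assoc, hidem]
  have hEA : ∀ i, E i * A = θ i • E i := by
    intro i
    rw [hA, Finset.mul_sum]
    rw [Finset.sum_eq_single i (fun j _ hj => by rw [mul_smul_comm, horth i j (Ne.symm hj), smul_zero])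
      (fun h => absurd (Finset.mem_univ i) h)]
    rw [mul_smul_comm, hidem]
  let A' : Module.End S.Z V :=
    { toFun := A
      map_add' := A.map_add
      map_smul' := fun z v => by
        show A ((z : Module.End F V) v) = (z : Module.End F V) (A v)
        rw [← Module.End.mul_apply, ← Module.End.mul_apply, hcomm] }
  have hA'app : ∀ v : V, A' v = A v := fun _ => rfl
  have hmem : ∀ (i : Fin (d + 1)) (v : V),
      v ∈ Module.End.eigenspace A' (algebraMap F S.Z (θ i)) ↔ A v = θ i • v := by
    intro i v
    rw [Module.End.mem_eigenspace_iff, halg_aux]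
    exact Iff.rfl
  have hsumv : ∀ v : V, v = ∑ i, E i v := by
    intro v
    have := congrArg (fun f : Module.End F V => f v) hsum
    simpa using this.symm
  have heig : ∀ (i : Fin (d + 1)) (w : V), A (E i w) = θ i • E i w := by
    intro i w
    rw [← Module.End.mul_apply, hAE, LinearMap.smul_apply]
  refine ⟨A', hA'app, ?_, ?_⟩
  · rw [eq_top_iff]
    rintro v -
    rw [hsumv v]
    exact Submodule.sum_mem _ fun i _ =>
      Submodule.mem_iSup_of_mem (algebraMap F S.Z (θ i)) ((hmem i _).mpr (heig i v))
  · intro i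
    ext v
    simp only [SetLike.mem_coe, hmem, Set.mem_range]
    constructor
    · intro hv
      refine ⟨v, ?_⟩
      have h0 : ∀ j, j ≠ i → E j v = 0 := by
        intro j hj
        have h1 : θ j • E j v = θ i • E j v := by
          have h2 := congrArg (fun f : Module.End F V => f v) (hEA j)
          simp only [Module.End.mul_apply, LinearMap.smul_apply] at h2
          rw [hv, map_smul] at h2
          exact h2.symm
        have h3 : (θ j - θ i) • E j v = 0 := by rw [sub_smul, h1, sub_self]
        rcases smul_eq_zero.mp h3 with h | h
        · exact absurd (hθ (sub_eq_zero.mp h)) hj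
        · exact h
      calc E i v = ∑ j, E j v := by
            rw [Finset.sum_eq_single i (fun j _ hj => h0 j hj) (fun h => absurd (Finset.mem_univ i) h)]
        _ = v := (hsumv v).symm
    · rintro ⟨w, rfl⟩
      exact heig i w
/-- Regard `V` as a vector space over `Z(T)` via restriction of the `T`-action.  Then
`A` and `A*` are `Z(T)`-linear (they induce `Z(T)`-endomorphisms `A'`, `B'` of `V`),
each is diagonalizable over `Z(T)` with the same eigenvalues `θ i` (resp. `θ' i`) and
the same eigenspaces `E i V` (resp. `E' i V`) as over `F`, the tridiagonal relations
continue to hold, the only `Z(T)`-subspaces invariant under both `A` and `A*` are `0`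
and `V`, and `dim_F Z(T) · dim_{Z(T)}(E i V) = ρ_i` where `ρ_i = dim_F (E i V)`;
i.e. `(A; E i; A*; E' i)` acts on the `Z(T)`-vector space `V` as a TD system with
eigenvalue sequence `θ`, dual eigenvalue sequence `θ'` and shape `ρ_i / ρ`. -/
theorem sharpen_tdp_stmt5 [FiniteDimensional F V] [Nontrivial V] (S : TDSystem F V d) :
    ∃ A' B' : Module.End S.Z V,
      (∀ v : V, A' v = S.A v) ∧
      (∀ v : V, B' v = S.B v) ∧
      (⨆ μ : S.Z, Module.End.eigenspace A' μ) = ⊤ ∧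
      (⨆ μ : S.Z, Module.End.eigenspace B' μ) = ⊤ ∧
      (∀ i : Fin (d + 1),
        (Module.End.eigenspace A' (algebraMap F S.Z (S.θ i)) : Set V) = Set.range (S.E i)) ∧
      (∀ i : Fin (d + 1),
        (Module.End.eigenspace B' (algebraMap F S.Z (S.θ' i)) : Set V) = Set.range (S.E' i)) ∧
      (∀ i j : Fin (d + 1), 1 < |((i : ℕ) : ℤ) - ((j : ℕ) : ℤ)| → S.E i * S.B * S.E j = 0) ∧
      (∀ i j : Fin (d + 1), 1 < |((i : ℕ) : ℤ) - ((j : ℕ) : ℤ)| → S.E' i * S.A * S.E' j = 0) ∧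
      (∀ W : Submodule S.Z V,
        (∀ v ∈ W, S.A v ∈ W) → (∀ v ∈ W, S.B v ∈ W) → W = ⊥ ∨ W = ⊤) ∧
      (∀ i : Fin (d + 1),
        Module.finrank F S.Z *
            Module.finrank S.Z (Module.End.eigenspace A' (algebraMap F S.Z (S.θ i))) =
          Module.finrank F (LinearMap.range (S.E i))) := by
  classical
  -- Basic membership facts
  have hAT : S.A ∈ S.T := Algebra.subset_adjoin (Set.mem_insert _ _)
  have hBT : S.B ∈ S.T := Algebra.subset_adjoin (Set.mem_insert_of_mem _ rfl)
  have hcent : ∀ (z : S.Z) (t : Module.End F V), t ∈ S.T →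
      t * (z : Module.End F V) = (z : Module.End F V) * t := fun z t ht =>
    (Subalgebra.mem_centralizer_iff F).mp z.2.2 t ht
  obtain ⟨A', hA'app, hA'sup, hA'eig⟩ :=
    eigen_aux S S.A S.E S.θ S.θ_inj S.E_idem S.E_orth S.E_sum S.A_eq
      (fun z => hcent z S.A hAT)
  obtain ⟨B', hB'app, hB'sup, hB'eig⟩ :=
    eigen_aux S S.B S.E' S.θ' S.θ'_inj S.E'_idem S.E'_orth S.E'_sum S.B_eq
      (fun z => hcent z S.B hBT)
  -- Irreducibility over Z
  have hirr : ∀ W : Submodule S.Z V,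
      (∀ v ∈ W, S.A v ∈ W) → (∀ v ∈ W, S.B v ∈ W) → W = ⊥ ∨ W = ⊤ := by
    intro W h1 h2
    let W' : Submodule F V :=
      { carrier := W
        add_mem' := fun ha hb => W.add_mem ha hb
        zero_mem' := W.zero_mem
        smul_mem' := fun c v hv => by
          show c • v ∈ W
          rw [← halg_aux S.Z c v]
          exact W.smul_mem _ hv }
    rcases S.irred W' h1 h2 with h | h
    · left
      rw [Submodule.eq_bot_iff]
      intro v hv
      exact (Submodule.eq_bot_iff W').mp h v hv
    · right
      rw [Submodule.eq_top_iff']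
      intro v
      exact Submodule.eq_top_iff'.mp h v
  -- Z is a field
  have hfield : IsField S.Z := by
    refine ⟨⟨0, 1, fun h => ?_⟩, mul_comm, ?_⟩
    · obtain ⟨v, hv⟩ := exists_ne (0 : V)
      have := congrArg (fun z : S.Z => (z : Module.End F V) v) h
      simp at this
      exact hv this.symm
    · intro a ha
      set f : Module.End F V := (a : Module.End F V) with hf
      have hf0 : f ≠ 0 := fun h => ha (Subtype.ext h)
      -- injectivity via irreducibility
      have hker : ∀ v ∈ LinearMap.ker f, S.A v ∈ LinearMap.ker f := by
        intro v hv
        rw [LinearMap.mem_ker] at hv ⊢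
        have : f (S.A v) = (S.A * f) v := by
          rw [← Module.End.mul_apply, hcent a S.A hAT]
        rw [this, Module.End.mul_apply, hv, map_zero]
      have hkerB : ∀ v ∈ LinearMap.ker f, S.B v ∈ LinearMap.ker f := by
        intro v hv
        rw [LinearMap.mem_ker] at hv ⊢
        have : f (S.B v) = (S.B * f) v := by
          rw [← Module.End.mul_apply, hcent a S.B hBT]
        rw [this, Module.End.mul_apply, hv, map_zero]
      have hinj : Function.Injective f := by
        rcases S.irred (LinearMap.ker f) hker hkerB with h | h
        · exact LinearMap.ker_eq_bot.mp h
        · exact absurd (LinearMap.ker_eq_top.mp h) hf0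
      have hsurj : Function.Surjective f :=
        (LinearMap.injective_iff_surjective).mp hinj
      -- minimal polynomial
      have hint : IsIntegral F f := IsIntegral.of_finite F f
      set p := minpoly F f with hp
      have hpne : p ≠ 0 := minpoly.ne_zero hint
      have hc : p.coeff 0 ≠ 0 := by
        intro hc0
        have hkey : p.divX * Polynomial.X = p := by
          conv_rhs => rw [← p.divX_mul_X_add]
          rw [hc0, map_zero, add_zero]
        have h2 : (Polynomial.aeval f) p.divX * f = 0 := by
          have h0 : (Polynomial.aeval f) p = 0 := minpoly.aeval F f
          rw [← hkey, map_mul, Polynomial.aeval_X] at h0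
          exact h0
        have hdvx0 : (Polynomial.aeval f) p.divX = 0 := by
          apply LinearMap.ext
          intro v
          obtain ⟨w, rfl⟩ := hsurj v
          have := congrArg (fun g : Module.End F V => g w) h2
          simpa using this
        have hdvxne : p.divX ≠ 0 := fun h => hpne (by rw [← hkey, h, zero_mul])
        exact absurd (minpoly.degree_le_of_ne_zero F f hdvxne hdvx0)
          (not_le.mpr (Polynomial.degree_divX_lt hpne))
      set q : Module.End F V := (Polynomial.aeval f) p.divX with hq
      set g : Module.End F V := (-(p.coeff 0)⁻¹) • q with hg
      have hqf : q * f + (p.coeff 0) • 1 = 0 := by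
        have h0 : (Polynomial.aeval f) p = 0 := minpoly.aeval F f
        conv at h0 => rw [← p.divX_mul_X_add]
        rw [map_add, map_mul, Polynomial.aeval_X, Polynomial.aeval_C,
          Algebra.algebraMap_eq_smul_one] at h0
        exact h0
      have hgf : g * f = 1 := by
        have h1 : q * f = -(p.coeff 0 • 1) := eq_neg_of_add_eq_zero_left hqf
        rw [hg, smul_mul_assoc, h1, smul_neg, neg_smul, neg_neg, smul_smul,
          inv_mul_cancel₀ hc, one_smul]
      have hfq : f * q = q * f := by
        have hmem : q ∈ Subalgebra.centralizer F ({f} : Set (Module.End F V)) := by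
          apply Algebra.adjoin_le ?_ (Polynomial.aeval_mem_adjoin_singleton F f)
          rw [Set.singleton_subset_iff]
          exact (Subalgebra.mem_centralizer_iff F).mpr (fun s hs => by rw [Set.mem_singleton_iff] at hs; rw [hs])
        exact (Subalgebra.mem_centralizer_iff F).mp hmem f rfl
      have hfg : f * g = 1 := by
        rw [hg, mul_smul_comm, hfq, ← smul_mul_assoc, ← hg, hgf]
      have hg_adj : g ∈ Algebra.adjoin F ({f} : Set (Module.End F V)) :=
        Subalgebra.smul_mem _ (Polynomial.aeval_mem_adjoin_singleton F f) _
      have hgT : g ∈ S.T :=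
        Algebra.adjoin_le (Set.singleton_subset_iff.mpr a.2.1) hg_adj
      have hgC : g ∈ Subalgebra.centralizer F (S.T : Set (Module.End F V)) := by
        rw [Subalgebra.mem_centralizer_iff]
        intro t ht
        have hft : f ∈ Subalgebra.centralizer F ({t} : Set (Module.End F V)) :=
          (Subalgebra.mem_centralizer_iff F).mpr (fun s hs => by
            rw [Set.mem_singleton_iff] at hs; rw [hs]; exact hcent a t ht)
        have : g ∈ Subalgebra.centralizer F ({t} : Set (Module.End F V)) :=
          Algebra.adjoin_le (Set.singleton_subset_iff.mpr hft) hg_adj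
        exact (Subalgebra.mem_centralizer_iff F).mp this t rfl
      refine ⟨⟨g, ?_⟩, ?_⟩
      · exact Algebra.mem_inf.mpr ⟨hgT, hgC⟩
      · exact Subtype.ext hfg
  letI : Field S.Z := hfield.toField
  refine ⟨A', B', hA'app, hB'app, hA'sup, hB'sup, hA'eig, hB'eig, S.tri, S.tri', hirr, ?_⟩
  intro i
  set U := Module.End.eigenspace A' (algebraMap F S.Z (S.θ i)) with hUdef
  have hset : (U : Set V) = Set.range (S.E i) := hA'eig i
  have e : U ≃ₗ[F] LinearMap.range (S.E i) :=
    { toFun := fun x => ⟨x.1, by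
        have hx : (x : V) ∈ Set.range (S.E i) := by rw [← hset]; exact x.2
        exact LinearMap.mem_range.mpr hx⟩
      invFun := fun y => ⟨y.1, by
        have hy : (y : V) ∈ Set.range (S.E i) := LinearMap.mem_range.mp y.2
        show (y : V) ∈ U
        rw [← SetLike.mem_coe, hset]
        exact hy⟩
      map_add' := fun x y => rfl
      map_smul' := fun c x => rfl
      left_inv := fun x => rfl
      right_inv := fun y => rfl }
  rw [← e.finrank_eq]
  exact Module.finrank_mul_finrank F S.Z U
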